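/- For the standard Gaussian g₀ and the square lattice Λ_□ = (1/√2)ℤ × (1/√2)ℤ of redundancy 2, the ratio of the sharp upper to the sharp lower Gabor frame bound is √2: explicitly, (Σ_{k∈ℤ} e^{-πk²})² = √2 · (Σ_{k∈ℤ}(-1)^k e^{-πk²})². -/

import Mathlib

open Real

private lemma hasSum_split {γ₁ γ₂ β : Type*} {f : β → ℝ} {i₁ : γ₁ → β} {i₂ : γ₂ → β}
    (h₁ : Function.Injective i₁) (h₂ : Function.Injective i₂)
    (hran : ∀ x, x ∈ Set.range i₂ ↔ x ∉ Set.range i₁) {a b : ℝ}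
    (ha : HasSum (f ∘ i₁) a) (hb : HasSum (f ∘ i₂) b) : HasSum f (a + b) := by
  have hs : HasSum (f ∘ ((↑) : Set.range i₁ → β)) a := by
    rw [← (Equiv.ofInjective i₁ h₁).hasSum_iff]
    exact ha
  have ht : HasSum (f ∘ ((↑) : ((Set.range i₁)ᶜ : Set β) → β)) b := by
    have hre : Set.range i₂ = (Set.range i₁)ᶜ := by
      ext x; simpa using hran x
    rw [← hre, ← (Equiv.ofInjective i₂ h₂).hasSum_iff]
    exact hb
  exact hs.add_compl ht

private lemma summable_gauss (c : ℝ) {t : ℝ} (ht : 0 < t) :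
    Summable fun k : ℤ => Real.exp (-π * ((k : ℝ) + c) ^ 2 * t) := by
  refine (HurwitzKernelBounds.summable_f_int 0 c ht).congr fun n => ?_
  simp [HurwitzKernelBounds.f_int, neg_mul]

private lemma abs_neg_one_zpow' (k : ℤ) : |(-1 : ℝ) ^ k| = 1 := by
  rcases Int.even_or_odd k with h | h
  · rw [h.neg_zpow, one_zpow, abs_one]
  · rw [h.neg_zpow, abs_neg, one_zpow, abs_one]

theorem square_lattice_condition_number :
    (∑' k : ℤ, Real.exp (-π * (k : ℝ) ^ 2)) ^ 2 =
      Real.sqrt 2 * (∑' k : ℤ, (-1 : ℝ) ^ k * Real.exp (-π * (k : ℝ) ^ 2)) ^ 2 := by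
  -- basic one-variable functions
  set fS : ℤ → ℝ := fun k => Real.exp (-π * (k : ℝ) ^ 2) with hfS
  set fA : ℤ → ℝ := fun k => (-1 : ℝ) ^ k * Real.exp (-π * (k : ℝ) ^ 2) with hfA
  set fT : ℤ → ℝ := fun k => Real.exp (-π * (k : ℝ) ^ 2 * 2) with hfT
  set fU : ℤ → ℝ := fun k => Real.exp (-π * ((k : ℝ) + 1 / 2) ^ 2 * 2) with hfU
  -- summability
  have sfS : Summable fS := by
    refine (summable_gauss 0 one_pos).congr fun n => ?_
    simp [hfS]
  have sfT : Summable fT := by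
    refine (summable_gauss 0 two_pos).congr fun n => ?_
    simp [hfT]
  have sfU : Summable fU := by
    refine (summable_gauss (1 / 2) two_pos).congr fun n => ?_
    simp [hfU]
  have sfA : Summable fA := by
    refine Summable.of_norm ?_
    refine sfS.congr fun n => ?_
    simp [hfS, hfA, Real.norm_eq_abs, abs_mul, abs_neg_one_zpow', Real.abs_exp]
  -- norm-summability
  have nS : Summable fun k : ℤ => ‖fS k‖ := by
    refine sfS.congr fun n => ?_
    simp [hfS, Real.norm_eq_abs, Real.abs_exp]
  have nA : Summable fun k : ℤ => ‖fA k‖ := by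
    refine sfS.congr fun n => ?_
    simp [hfS, hfA, Real.norm_eq_abs, abs_mul, abs_neg_one_zpow', Real.abs_exp]
  have nT : Summable fun k : ℤ => ‖fT k‖ := by
    refine sfT.congr fun n => ?_
    simp [hfT, Real.norm_eq_abs, Real.abs_exp]
  have nU : Summable fun k : ℤ => ‖fU k‖ := by
    refine sfU.congr fun n => ?_
    simp [hfU, Real.norm_eq_abs, Real.abs_exp]
  set S := ∑' k, fS k with hS
  set A := ∑' k, fA k with hA
  set T := ∑' k, fT k with hT
  set U := ∑' k, fU k with hU
  -- the two reindexing maps on ℤ × ℤ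
  set i₁ : ℤ × ℤ → ℤ × ℤ := fun q => (q.1 + q.2, q.1 - q.2) with hi₁
  set i₂ : ℤ × ℤ → ℤ × ℤ := fun q => (q.1 + q.2 + 1, q.1 - q.2) with hi₂
  have inj₁ : Function.Injective i₁ := by
    intro p q h
    simp only [hi₁, Prod.ext_iff] at h ⊢
    omega
  have inj₂ : Function.Injective i₂ := by
    intro p q h
    simp only [hi₂, Prod.ext_iff] at h ⊢
    omega
  have hran : ∀ x : ℤ × ℤ, x ∈ Set.range i₂ ↔ x ∉ Set.range i₁ := by
    intro x
    simp only [Set.mem_range, hi₁, hi₂, Prod.ext_iff]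
    constructor
    · rintro ⟨q, h1, h2⟩ ⟨p, h3, h4⟩
      omega
    · intro h
      rcases Int.even_or_odd (x.1 + x.2) with ⟨k, hk⟩ | ⟨k, hk⟩
      · exact absurd ⟨(k, x.1 - k), by constructor <;> omega⟩ h
      · exact ⟨(k, x.1 - 1 - k), by constructor <;> omega⟩
  -- Step 1 : S * S = T * T + U * U
  have hSS : HasSum (fun q : ℤ × ℤ => fS q.1 * fS q.2) (S * S) :=
    sfS.hasSum.mul sfS.hasSum (summable_mul_of_summable_norm nS nS)
  have hTT : HasSum (fun q : ℤ × ℤ => fT q.1 * fT q.2) (T * T) :=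
    sfT.hasSum.mul sfT.hasSum (summable_mul_of_summable_norm nT nT)
  have hUU : HasSum (fun q : ℤ × ℤ => fU q.1 * fU q.2) (U * U) :=
    sfU.hasSum.mul sfU.hasSum (summable_mul_of_summable_norm nU nU)
  have eq1 : S * S = T * T + U * U := by
    refine hSS.unique (hasSum_split inj₁ inj₂ hran ?_ ?_)
    · refine hTT.congr_fun fun q => ?_
      simp only [hfS, hfT, hi₁, Function.comp_apply, ← Real.exp_add]
      push_cast
      ring_nf
    · refine hUU.congr_fun fun q => ?_
      simp only [hfS, hfU, hi₂, Function.comp_apply, ← Real.exp_add]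
      push_cast
      ring_nf
  -- Step 2 : A * A = T * T - U * U
  have hAA : HasSum (fun q : ℤ × ℤ => fA q.1 * fA q.2) (A * A) :=
    sfA.hasSum.mul sfA.hasSum (summable_mul_of_summable_norm nA nA)
  have eq2 : A * A = T * T - U * U := by
    have hneg : HasSum (fun q : ℤ × ℤ => -(fU q.1 * fU q.2)) (-(U * U)) := hUU.neg
    have : HasSum (fun q : ℤ × ℤ => fA q.1 * fA q.2) (T * T + -(U * U)) := by
      refine hasSum_split inj₁ inj₂ hran ?_ ?_
      · refine hTT.congr_fun fun q => ?_
        have hsign : (-1 : ℝ) ^ (q.1 + q.2) * (-1 : ℝ) ^ (q.1 - q.2) = 1 := by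
          rw [← zpow_add₀ (by norm_num : (-1 : ℝ) ≠ 0),
            Even.neg_zpow ⟨q.1, by ring⟩, one_zpow]
        simp only [hfA, hfT, hi₁, Function.comp_apply]
        rw [mul_mul_mul_comm, hsign, one_mul, ← Real.exp_add, ← Real.exp_add]
        congr 1
        push_cast
        ring
      · refine hneg.congr_fun fun q => ?_
        have hsign : (-1 : ℝ) ^ (q.1 + q.2 + 1) * (-1 : ℝ) ^ (q.1 - q.2) = -1 := by
          rw [← zpow_add₀ (by norm_num : (-1 : ℝ) ≠ 0),
            Odd.neg_zpow ⟨q.1, by ring⟩, one_zpow]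
        simp only [hfA, hfU, hi₂, Function.comp_apply]
        rw [mul_mul_mul_comm, hsign, neg_one_mul, ← Real.exp_add, ← Real.exp_add]
        congr 1
        push_cast
        ring_nf
    linarith [hAA.unique this]
  -- Step 3 : T + U = sqrt 2 * T  (Poisson summation)
  have eq3 : T + U = Real.sqrt 2 * T := by
    have hsplit : HasSum (fun k : ℤ => Real.exp (-π * (1 / 2) * (k : ℝ) ^ 2)) (T + U) := by
      have injO : Function.Injective (fun k : ℤ => 2 * k) := by
        intro a b h
        dsimp only at h
        omega
      have injE : Function.Injective (fun k : ℤ => 2 * k + 1) := by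
        intro a b h
        dsimp only at h
        omega
      have hranZ : ∀ x : ℤ, x ∈ Set.range (fun k : ℤ => 2 * k + 1) ↔
          x ∉ Set.range (fun k : ℤ => 2 * k) := by
        intro x
        simp only [Set.mem_range]
        constructor
        · rintro ⟨k, rfl⟩ ⟨m, hm⟩; omega
        · intro h
          rcases Int.even_or_odd x with ⟨k, hk⟩ | ⟨k, hk⟩
          · exact absurd ⟨k, by omega⟩ h
          · exact ⟨k, by omega⟩
      refine hasSum_split injO injE hranZ ?_ ?_
      · refine sfT.hasSum.congr_fun fun k => ?_
        simp only [hfT, Function.comp_apply]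
        congr 1
        push_cast
        ring
      · refine sfU.hasSum.congr_fun fun k => ?_
        simp only [hfU, Function.comp_apply]
        congr 1
        push_cast
        ring
    have hpois := Real.tsum_exp_neg_mul_int_sq (a := 1 / 2) (by norm_num)
    have hval : (1 : ℝ) / ((1 / 2 : ℝ)) ^ ((1 : ℝ) / 2) = Real.sqrt 2 := by
      rw [← Real.sqrt_eq_rpow, one_div, show (1 / 2 : ℝ) = 2⁻¹ by norm_num,
        Real.sqrt_inv, inv_inv]
    have hTeq : (∑' n : ℤ, Real.exp (-π / (1 / 2) * (n : ℝ) ^ 2)) = T := by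
      refine tsum_congr fun n => ?_
      simp only [hfT]
      congr 1
      ring
    rw [hval, hTeq] at hpois
    rw [← hsplit.tsum_eq, hpois]
  -- final algebra
  have h2 : Real.sqrt 2 ^ 2 = 2 := Real.sq_sqrt (by norm_num)
  have hU' : U = Real.sqrt 2 * T - T := by linarith
  rw [pow_two, pow_two, eq1, eq2, hU']
  linear_combination (Real.sqrt 2 - 1) * T * T * h2
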